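/- Fix a real γ ≥ 2 and for each natural number t set A(t) = √((t + γ)/(t + 1 + γ)) − γ/(t + 1 + γ). Then (t + γ) · (1 − √(A(t)² + 1/(t + 1 + γ))) converges to γ as t → ∞. -/

import Mathlib

open Filter

/-- **Asymptotics of the contraction factor.** For `γ ≥ 2` and
`A t = √((t+γ)/(t+1+γ)) − γ/(t+1+γ)`, the quantity
`(t+γ)(1 − √(A t² + 1/(t+1+γ)))` converges to `γ` as `t → ∞`. -/
theorem contraction_factor_asymptotics (γ : ℝ) (hγ : 2 ≤ γ) :
    Tendsto (fun t : ℕ =>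
        ((t : ℝ) + γ) *
          (1 - Real.sqrt
            ((Real.sqrt (((t : ℝ) + γ) / ((t : ℝ) + 1 + γ)) - γ / ((t : ℝ) + 1 + γ)) ^ 2
              + 1 / ((t : ℝ) + 1 + γ))))
      atTop (nhds γ) := by
  have hu : ∀ t : ℕ, (0 : ℝ) < (t : ℝ) + 1 + γ := fun t => by positivity
  have hs : ∀ t : ℕ, (0 : ℝ) < (t : ℝ) + γ := fun t => by positivity
  -- u → ∞
  have h1 : Tendsto (fun t : ℕ => (t : ℝ) + 1 + γ) atTop atTop := by
    have := tendsto_natCast_atTop_atTop (R := ℝ)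
    have := tendsto_atTop_add_const_right atTop (1 + γ) this
    simpa [add_assoc] using this
  have h2 : Tendsto (fun t : ℕ => 1 / ((t : ℝ) + 1 + γ)) atTop (nhds 0) := by
    simpa [one_div] using (show Tendsto (fun t : ℕ => ((t : ℝ) + 1 + γ)⁻¹) atTop (nhds 0) from h1.inv_tendsto_atTop)
  have h3 : Tendsto (fun t : ℕ => ((t : ℝ) + γ) / ((t : ℝ) + 1 + γ)) atTop (nhds 1) := by
    have : Tendsto (fun t : ℕ => 1 - 1 / ((t : ℝ) + 1 + γ)) atTop (nhds (1 - 0)) :=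
      tendsto_const_nhds.sub h2
    refine Tendsto.congr (fun t => ?_) (by simpa using this)
    field_simp
    ring
  have h4 : Tendsto (fun t : ℕ => Real.sqrt (((t : ℝ) + γ) / ((t : ℝ) + 1 + γ))) atTop
      (nhds 1) := by
    have := h3.sqrt
    rwa [Real.sqrt_one] at this
  have h5 : Tendsto (fun t : ℕ => γ / ((t : ℝ) + 1 + γ)) atTop (nhds 0) := by
    have : Tendsto (fun t : ℕ => γ * (1 / ((t : ℝ) + 1 + γ))) atTop (nhds (γ * 0)) :=
      tendsto_const_nhds.mul h2
    simpa [mul_one_div, div_eq_mul_inv] using this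
  have hB : Tendsto (fun t : ℕ =>
      (Real.sqrt (((t : ℝ) + γ) / ((t : ℝ) + 1 + γ)) - γ / ((t : ℝ) + 1 + γ)) ^ 2
        + 1 / ((t : ℝ) + 1 + γ)) atTop (nhds 1) := by
    have : Tendsto (fun t : ℕ =>
        (Real.sqrt (((t : ℝ) + γ) / ((t : ℝ) + 1 + γ)) - γ / ((t : ℝ) + 1 + γ)) ^ 2
          + 1 / ((t : ℝ) + 1 + γ)) atTop (nhds ((1 - 0) ^ 2 + 0)) :=
      ((h4.sub h5).pow 2).add h2
    simpa using this
  have hsB : Tendsto (fun t : ℕ => Real.sqrt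
      ((Real.sqrt (((t : ℝ) + γ) / ((t : ℝ) + 1 + γ)) - γ / ((t : ℝ) + 1 + γ)) ^ 2
        + 1 / ((t : ℝ) + 1 + γ))) atTop (nhds 1) := by
    have := hB.sqrt
    rwa [Real.sqrt_one] at this
  -- the rewritten expression and its limit
  have hmain : Tendsto (fun t : ℕ =>
      γ * (((t : ℝ) + γ) / ((t : ℝ) + 1 + γ)) *
        (2 * Real.sqrt (((t : ℝ) + γ) / ((t : ℝ) + 1 + γ)) - γ / ((t : ℝ) + 1 + γ)) /
      (1 + Real.sqrt
        ((Real.sqrt (((t : ℝ) + γ) / ((t : ℝ) + 1 + γ)) - γ / ((t : ℝ) + 1 + γ)) ^ 2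
          + 1 / ((t : ℝ) + 1 + γ)))) atTop (nhds γ) := by
    have hnum : Tendsto (fun t : ℕ =>
        γ * (((t : ℝ) + γ) / ((t : ℝ) + 1 + γ)) *
          (2 * Real.sqrt (((t : ℝ) + γ) / ((t : ℝ) + 1 + γ)) - γ / ((t : ℝ) + 1 + γ)))
        atTop (nhds (γ * 1 * (2 * 1 - 0))) :=
      (tendsto_const_nhds.mul h3).mul ((tendsto_const_nhds.mul h4).sub h5)
    have hden : Tendsto (fun t : ℕ =>
        1 + Real.sqrt
          ((Real.sqrt (((t : ℝ) + γ) / ((t : ℝ) + 1 + γ)) - γ / ((t : ℝ) + 1 + γ)) ^ 2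
            + 1 / ((t : ℝ) + 1 + γ))) atTop (nhds (1 + 1)) :=
      tendsto_const_nhds.add hsB
    have := hnum.div hden (by norm_num)
    have hγ' : γ * 1 * (2 * 1 - 0) / (1 + 1) = γ := by ring
    rwa [hγ'] at this
  refine Tendsto.congr (fun t => ?_) hmain
  set u : ℝ := (t : ℝ) + 1 + γ with hudef
  set s : ℝ := (t : ℝ) + γ with hsdef
  have hupos : 0 < u := hu t
  have hspos : 0 < s := hs t
  have hus : u = s + 1 := by rw [hudef, hsdef]; ring
  set r : ℝ := Real.sqrt (s / u) with hrdef
  have hr2 : r ^ 2 = s / u := Real.sq_sqrt (by positivity)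
  set B : ℝ := (r - γ / u) ^ 2 + 1 / u with hBdef
  have hBnn : 0 ≤ B := by positivity
  set b : ℝ := Real.sqrt B with hbdef
  have hb2 : b ^ 2 = B := Real.sq_sqrt hBnn
  have hbnn : 0 ≤ b := Real.sqrt_nonneg _
  have hden : (0 : ℝ) < 1 + b := by linarith
  rw [eq_comm, eq_div_iff (ne_of_gt hden)]
  have h1B : s * (1 - b) * (1 + b) = s * (1 - B) := by
    have : (1 - b) * (1 + b) = 1 - b ^ 2 := by ring
    rw [mul_assoc, this, hb2]
  rw [h1B, hBdef]
  clear_value b B r s u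
  subst hus
  have hune : s + 1 ≠ 0 := by linarith
  rw [eq_div_iff hune] at hr2
  field_simp
  linear_combination (-(s + 1)) * hr2
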